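/- Let ρ ∈ Matrix (Fin d) (Fin d) ℂ be positive definite with trace 1, and let A be a measurement with n outcomes on ℂ^d all of whose effects are nonzero. Then the trace of F_ρ(A), which equals the real number ∑ x, tr(ρ * A x * A x) / tr(ρ * A x), is at least 1; moreover it equals 1 if and only if A is trivial, i.e., for every x there exists a real a_x > 0 with A x = (a_x : ℂ) • 1. -/

import Mathlib

open Matrix
open scoped Kronecker ComplexOrder

noncomputable section

/-- A measurement (POVM): a finite family of positive semidefinite matrices summing to `1`. -/
def IsMeasurement {ι κ : Type*} [Fintype ι] [DecidableEq ι] [Fintype κ]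
    (A : κ → Matrix ι ι ℂ) : Prop :=
  (∀ x, (A x).PosSemidef) ∧ ∑ x, A x = 1

/-- `A` is a post-processing of `B`: `A ⪯ B`. -/
def PostProc {ι : Type*} {n m : ℕ}
    (A : Fin n → Matrix ι ι ℂ) (B : Fin m → Matrix ι ι ℂ) : Prop :=
  ∃ μ : Fin n → Fin m → ℝ,
    (∀ x y, 0 ≤ μ x y) ∧ (∀ y, ∑ x, μ x y = 1) ∧
    (∀ x, A x = ∑ y, (μ x y : ℂ) • B y)

/-- The outer product `|E⟩⟨F|` of the vectorizations of two matrices. -/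
def outerProd {ι : Type*} (E F : Matrix ι ι ℂ) : Matrix (ι × ι) (ι × ι) ℂ :=
  Matrix.of fun p q => E p.1 p.2 * star (F q.1 q.2)

/-- The (un-normalized) Fisher information map of a measurement. -/
noncomputable def Fisher {ι κ : Type*} [Fintype ι] [Fintype κ]
    (A : κ → Matrix ι ι ℂ) : Matrix (ι × ι) (ι × ι) ℂ :=
  ∑ x, (Matrix.trace (A x))⁻¹ • outerProd (A x) (A x)

/-- The positive semidefinite square root of a positive semidefinite matrix, as defined in
Mathlib of December 2024 (since removed from Mathlib). -/
noncomputable def Matrix.PosSemidef.sqrt {n 𝕜 : Type*} [Fintype n] [DecidableEq n] [RCLike 𝕜]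
    {A : Matrix n n 𝕜} (hA : A.PosSemidef) : Matrix n n 𝕜 :=
  hA.isHermitian.eigenvectorUnitary.1 * diagonal ((↑) ∘ (√·) ∘ hA.isHermitian.eigenvalues) *
  (star hA.isHermitian.eigenvectorUnitary : Matrix n n 𝕜)

/-- The generalized Fisher information map of a measurement, relative to a
positive definite state `ρ` (with positive semidefinite square root `ρ^{1/2}`). -/
noncomputable def FisherRho {ι κ : Type*} [Fintype ι] [DecidableEq ι] [Fintype κ]
    {ρ : Matrix ι ι ℂ} (hρ : ρ.PosDef) (A : κ → Matrix ι ι ℂ) :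
    Matrix (ι × ι) (ι × ι) ℂ :=
  ∑ x, (Matrix.trace (ρ * A x))⁻¹ •
    outerProd (hρ.posSemidef.sqrt * A x) (hρ.posSemidef.sqrt * A x)

/-- The height of a finite family of self-adjoint matrices: the infimum of the traces of
Hermitian matrices dominating every member in the Loewner order. -/
noncomputable def height {ι κ : Type*} [Fintype ι] [Fintype κ]
    (X : κ → Matrix ι ι ℂ) : ℝ :=
  sInf { t : ℝ | ∃ H : Matrix ι ι ℂ, H.IsHermitian ∧
    (∀ i, (H - X i).PosSemidef) ∧ t = (Matrix.trace H).re }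

lemma Matrix.PosSemidef.posSemidef_sqrt {n 𝕜 : Type*} [Fintype n] [DecidableEq n] [RCLike 𝕜]
    {A : Matrix n n 𝕜} (hA : A.PosSemidef) : hA.sqrt.PosSemidef := by
  unfold Matrix.PosSemidef.sqrt
  have hD : (diagonal ((↑) ∘ (√·) ∘ hA.isHermitian.eigenvalues : n → 𝕜)).PosSemidef := by
    refine posSemidef_diagonal_iff.mpr fun i => ?_
    simp only [Function.comp_apply]
    exact_mod_cast Real.sqrt_nonneg _
  simpa [Matrix.star_eq_conjTranspose] using
    hD.mul_mul_conjTranspose_same (hA.isHermitian.eigenvectorUnitary : Matrix n n 𝕜)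

lemma Matrix.PosSemidef.sqrt_mul_self {n 𝕜 : Type*} [Fintype n] [DecidableEq n] [RCLike 𝕜]
    {A : Matrix n n 𝕜} (hA : A.PosSemidef) : hA.sqrt * hA.sqrt = A := by
  unfold Matrix.PosSemidef.sqrt
  conv_rhs => rw [hA.isHermitian.spectral_theorem, Unitary.conjStarAlgAut_apply]
  have hU : (star hA.isHermitian.eigenvectorUnitary : Matrix n n 𝕜) *
      (hA.isHermitian.eigenvectorUnitary : Matrix n n 𝕜) = 1 := by simp
  simp only [mul_assoc, ← mul_assoc (star hA.isHermitian.eigenvectorUnitary : Matrix n n 𝕜),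
    hU, one_mul]
  rw [← mul_assoc (diagonal _), diagonal_mul_diagonal]
  congr 3
  funext i
  simp only [Function.comp_apply]
  rw [← RCLike.ofReal_mul, Real.mul_self_sqrt (hA.eigenvalues_nonneg i)]

lemma trace_ctms_eq {m k : Type*} [Fintype m] [Fintype k] (B : Matrix m k ℂ) :
    (Bᴴ * B).trace = ((∑ j, ∑ i, Complex.normSq (B i j) : ℝ) : ℂ) := by
  push_cast
  simp only [Matrix.trace, Matrix.diag, Matrix.mul_apply, Matrix.conjTranspose_apply]
  refine Finset.sum_congr rfl fun j _ => Finset.sum_congr rfl fun i _ => ?_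
  rw [Complex.star_def, ← Complex.normSq_eq_conj_mul_self]

lemma trace_ctms_nonneg {m k : Type*} [Fintype m] [Fintype k] (B : Matrix m k ℂ) :
    0 ≤ (Bᴴ * B).trace := by
  rw [trace_ctms_eq]
  exact Complex.zero_le_real.mpr (Finset.sum_nonneg fun j _ =>
    Finset.sum_nonneg fun i _ => Complex.normSq_nonneg _)

lemma trace_ctms_eq_zero {m k : Type*} [Fintype m] [Fintype k] (B : Matrix m k ℂ)
    (h : (Bᴴ * B).trace = 0) : B = 0 := by
  rw [trace_ctms_eq, Complex.ofReal_eq_zero] at h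
  have h1 : ∀ j ∈ Finset.univ, (0:ℝ) ≤ ∑ i, Complex.normSq (B i j) :=
    fun j _ => Finset.sum_nonneg fun i _ => Complex.normSq_nonneg _
  ext i j
  have h2 := (Finset.sum_eq_zero_iff_of_nonneg h1).mp h j (Finset.mem_univ j)
  have h3 := (Finset.sum_eq_zero_iff_of_nonneg
    (fun i _ => Complex.normSq_nonneg (B i j))).mp h2 i (Finset.mem_univ i)
  simpa using Complex.normSq_eq_zero.mp h3

/-- Lower bound 1 on the trace of the generalized Fisher information matrix,
with equality iff the measurement is trivial. -/
theorem stmt5 {d n : ℕ} {ρ : Matrix (Fin d) (Fin d) ℂ} (hρ : ρ.PosDef)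
    (hρtr : Matrix.trace ρ = 1)
    (A : Fin n → Matrix (Fin d) (Fin d) ℂ) (hA : IsMeasurement A) (hA0 : ∀ x, A x ≠ 0)
    (T : ℝ) (hT : (T : ℂ) = ∑ x, Matrix.trace (ρ * A x * A x) / Matrix.trace (ρ * A x)) :
    Matrix.trace (FisherRho hρ A) = (T : ℂ) ∧ 1 ≤ T ∧
      (T = 1 ↔ ∀ x, ∃ a : ℝ, 0 < a ∧ A x = (a : ℂ) • 1) := by
  classical
  obtain ⟨hpsd, hsum⟩ := hA
  set s := hρ.posSemidef.sqrt with hs_def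
  have hsH : sᴴ = s := hρ.posSemidef.posSemidef_sqrt.1
  have hss : s * s = ρ := hρ.posSemidef.sqrt_mul_self
  have hAH : ∀ x, (A x)ᴴ = A x := fun x => (hpsd x).1
  have hρdet : ρ.det ≠ 0 := by
    have := hρ.isUnit
    rw [Matrix.isUnit_iff_isUnit_det, isUnit_iff_ne_zero] at this
    exact this
  have hsu : IsUnit s.det := by
    rw [isUnit_iff_ne_zero]
    intro h
    exact hρdet (by rw [← hss, Matrix.det_mul, h, mul_zero])
  have hscancel : ∀ M : Matrix (Fin d) (Fin d) ℂ, s * M = 0 → M = 0 := by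
    intro M h
    calc M = s⁻¹ * (s * M) := by
            rw [← Matrix.mul_assoc, Matrix.nonsing_inv_mul s hsu, Matrix.one_mul]
      _ = 0 := by rw [h, Matrix.mul_zero]
  -- key: for Hermitian N, trace (ρ * (N * N)) is nonneg, and zero only if N = 0
  have hkey : ∀ N : Matrix (Fin d) (Fin d) ℂ, Nᴴ = N →
      0 ≤ Matrix.trace (ρ * (N * N)) ∧
        (Matrix.trace (ρ * (N * N)) = 0 → N = 0) := by
    intro N hN
    have e : Matrix.trace (ρ * (N * N)) = Matrix.trace ((s * N)ᴴ * (s * N)) := by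
      have h1 : (s * N)ᴴ * (s * N) = N * ρ * N := by
        rw [Matrix.conjTranspose_mul, hsH, hN, Matrix.mul_assoc,
          ← Matrix.mul_assoc s s N, hss, ← Matrix.mul_assoc]
      rw [h1, ← Matrix.mul_assoc, Matrix.trace_mul_comm (ρ * N) N,
        ← Matrix.mul_assoc, Matrix.trace_mul_comm (N * ρ) N]
    exact ⟨e ▸ trace_ctms_nonneg (s * N),
      fun h => hscancel N (trace_ctms_eq_zero _ (e ▸ h))⟩
  -- positivity of the normalizations
  have hc : ∀ x, 0 < Matrix.trace (ρ * A x) := by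
    intro x
    have hq : (hpsd x).sqrt * (hpsd x).sqrt = A x := (hpsd x).sqrt_mul_self
    have hqH : ((hpsd x).sqrt)ᴴ = (hpsd x).sqrt := (hpsd x).posSemidef_sqrt.1
    have hk := hkey _ hqH
    rw [hq] at hk
    refine lt_of_le_of_ne hk.1 fun h0 => ?_
    exact hA0 x (by rw [← hq, hk.2 h0.symm, Matrix.mul_zero])
  set γ : Fin n → ℝ := fun x => (Matrix.trace (ρ * A x)).re with hγ_def
  have hγpos : ∀ x, 0 < γ x := fun x => by
    have := (Complex.lt_def.mp (hc x)).1; simpa using this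
  have hcγ : ∀ x, Matrix.trace (ρ * A x) = ((γ x : ℝ) : ℂ) := by
    intro x
    have him := (Complex.lt_def.mp (hc x)).2
    exact Complex.ext (by simp [hγ_def]) (by simp [← him])
  set M : Fin n → Matrix (Fin d) (Fin d) ℂ :=
    fun x => A x - ((γ x : ℝ) : ℂ) • 1 with hM_def
  have hMH : ∀ x, (M x)ᴴ = M x := by
    intro x
    simp [hM_def, Matrix.conjTranspose_smul, hAH x, Complex.star_def,
      Complex.conj_ofReal]
  have hM_apply : ∀ x, M x = A x - ((γ x : ℝ) : ℂ) • 1 := fun x => rfl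
  set τ : Fin n → ℝ := fun x => (Matrix.trace (ρ * (M x * M x))).re with hτ_def
  have hτc : ∀ x, Matrix.trace (ρ * (M x * M x)) = ((τ x : ℝ) : ℂ) := by
    intro x
    have him := (Complex.le_def.mp (hkey (M x) (hMH x)).1).2
    exact Complex.ext (by simp [hτ_def]) (by simp [← him])
  have hτnonneg : ∀ x, 0 ≤ τ x := fun x => by
    have := (Complex.le_def.mp (hkey (M x) (hMH x)).1).1; simpa using this
  have hτ_eq : ∀ x, Matrix.trace (ρ * A x * A x)
      = ((τ x : ℝ) : ℂ) + ((γ x : ℝ) : ℂ) ^ 2 := by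
    intro x
    have h1 : M x * M x = A x * A x - ((γ x : ℝ) : ℂ) • A x
        - ((γ x : ℝ) : ℂ) • A x + (((γ x : ℝ) : ℂ) ^ 2) • 1 := by
      simp only [hM_def, Matrix.sub_mul, Matrix.mul_sub, Matrix.smul_mul,
        Matrix.mul_smul, Matrix.mul_one, Matrix.one_mul, smul_smul, pow_two]
      module
    have h2 : Matrix.trace (ρ * (M x * M x))
        = Matrix.trace (ρ * A x * A x) - ((γ x : ℝ) : ℂ) ^ 2 := by
      rw [h1]
      simp only [Matrix.mul_sub, Matrix.mul_add, Matrix.mul_smul, Matrix.mul_one,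
        Matrix.trace_sub, Matrix.trace_add, Matrix.trace_smul, smul_eq_mul,
        hρtr, hcγ x, Matrix.mul_assoc]
      ring
    linear_combination hτc x - h2
  have hτ_zero : ∀ x, τ x = 0 ↔ A x = ((γ x : ℝ) : ℂ) • 1 := by
    intro x
    constructor
    · intro h
      have h0 : Matrix.trace (ρ * (M x * M x)) = 0 := by rw [hτc x, h]; simp
      have := (hkey (M x) (hMH x)).2 h0
      rw [hM_apply] at this
      exact sub_eq_zero.mp this
    · intro h
      have hM0 : M x = 0 := sub_eq_zero.mpr h
      have : Matrix.trace (ρ * (M x * M x)) = 0 := by rw [hM0]; simp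
      rw [hτc x] at this
      exact_mod_cast this
  have hsumγ : ∑ x, ((γ x : ℝ) : ℂ) = 1 := by
    calc ∑ x, ((γ x : ℝ) : ℂ) = ∑ x, Matrix.trace (ρ * A x) := by
          exact Finset.sum_congr rfl fun x _ => (hcγ x).symm
      _ = Matrix.trace (ρ * ∑ x, A x) := by
          rw [Finset.mul_sum, Matrix.trace_sum]
      _ = 1 := by rw [hsum, Matrix.mul_one, hρtr]
  have hγne : ∀ x, ((γ x : ℝ) : ℂ) ≠ 0 := fun x => by
    exact_mod_cast (hγpos x).ne'
  have hTr : T = 1 + ∑ x, τ x / γ x := by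
    have hTsum : (T : ℂ) = ((1 + ∑ x, τ x / γ x : ℝ) : ℂ) := by
      rw [hT]
      push_cast
      calc ∑ x, Matrix.trace (ρ * A x * A x) / Matrix.trace (ρ * A x)
          = ∑ x, (((τ x : ℝ) : ℂ) / ((γ x : ℝ) : ℂ) + ((γ x : ℝ) : ℂ)) := by
            refine Finset.sum_congr rfl fun x _ => ?_
            rw [hτ_eq x, hcγ x, add_div, pow_two, mul_div_assoc,
              div_self (hγne x), mul_one]
        _ = (∑ x, ((τ x : ℝ) : ℂ) / ((γ x : ℝ) : ℂ)) + ∑ x, ((γ x : ℝ) : ℂ) :=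
            Finset.sum_add_distrib
        _ = 1 + ∑ x, ((τ x : ℝ) : ℂ) / ((γ x : ℝ) : ℂ) := by rw [hsumγ]; ring
    exact_mod_cast hTsum
  refine ⟨?_, ?_, ?_⟩
  · -- trace identity
    have houter : ∀ x, Matrix.trace (outerProd (s * A x) (s * A x))
        = Matrix.trace (ρ * A x * A x) := by
      intro x
      have h1 : Matrix.trace (outerProd (s * A x) (s * A x))
          = Matrix.trace ((s * A x) * (s * A x)ᴴ) := by
        simp only [Matrix.trace, Matrix.diag, outerProd, Matrix.mul_apply,
          Matrix.conjTranspose_apply, Matrix.of_apply]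
        rw [Fintype.sum_prod_type]
      rw [h1, Matrix.conjTranspose_mul, hsH, hAH x, ← Matrix.mul_assoc,
        Matrix.trace_mul_cycle, ← Matrix.mul_assoc s s (A x), hss]
    rw [FisherRho, Matrix.trace_sum]
    rw [hT]
    refine Finset.sum_congr rfl fun x _ => ?_
    rw [Matrix.trace_smul, smul_eq_mul, houter x]
    exact inv_mul_eq_div _ _
  · -- lower bound
    rw [hTr]
    exact le_add_of_nonneg_right (Finset.sum_nonneg fun x _ =>
      div_nonneg (hτnonneg x) (hγpos x).le)
  · -- equality iff trivial
    rw [hTr]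
    constructor
    · intro h
      have hzero : ∑ x, τ x / γ x = 0 := by linarith
      intro x
      have := (Finset.sum_eq_zero_iff_of_nonneg fun x _ =>
        div_nonneg (hτnonneg x) (hγpos x).le).mp hzero x (Finset.mem_univ x)
      have hτ0 : τ x = 0 := by
        rcases div_eq_zero_iff.mp this with h' | h'
        · exact h'
        · exact absurd h' (hγpos x).ne'
      exact ⟨γ x, hγpos x, (hτ_zero x).mp hτ0⟩
    · intro h
      have hτ0 : ∀ x, τ x = 0 := by
        intro x
        obtain ⟨a, ha, hax⟩ := h x
        have hca : Matrix.trace (ρ * A x) = ((a : ℝ) : ℂ) := by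
          rw [hax, Matrix.mul_smul, Matrix.trace_smul, Matrix.mul_one, hρtr]
          simp
        have hγa : γ x = a := by
          have := (hcγ x).symm.trans hca
          exact_mod_cast this
        exact (hτ_zero x).mpr (by rw [hγa, ← hax])
      have : ∑ x, τ x / γ x = 0 :=
        Finset.sum_eq_zero fun x _ => by rw [hτ0 x, zero_div]
      rw [this] at *
      linarith
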